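/- Any context with empty local part (i.e., of the form (G, nil)) is compatible with every context Γ. -/

import Mathlib

abbrev Var := ℕ
abbrev Ctx := Finset Var × List Var

/-- `Γ,x` : extend the local part with `x` as innermost (rightmost) variable.
Lists represent local contexts with head = outermost (leftmost). -/
def Ctx.snoc (Γ : Ctx) (x : Var) : Ctx := (Γ.1, Γ.2 ++ [x])

/-- The least partial order on contexts generated by
`(G,L) < (G ∪ {x}, L)` for `x ∉ G` and `(G,L) < (G \ {x}, x::L)`. -/
inductive CtxLe : Ctx → Ctx → Prop
  | refl (Γ : Ctx) : CtxLe Γ Γ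
  | trans {Γ Δ Θ : Ctx} : CtxLe Γ Δ → CtxLe Δ Θ → CtxLe Γ Θ
  | glob (G : Finset Var) (L : List Var) (x : Var) (h : x ∉ G) :
      CtxLe (G, L) (insert x G, L)
  | loc (G : Finset Var) (L : List Var) (x : Var) :
      CtxLe (G, L) (G.erase x, x :: L)

def Compatible (Γ Δ : Ctx) : Prop := ∃ Θ, CtxLe Γ Θ ∧ CtxLe Δ Θ

/-- Any context with empty local part is compatible with every context. -/
lemma ctxle_cons (G : Finset Var) (L : List Var) (x : Var) :
    CtxLe (G, L) (G, x :: L) := by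
  by_cases h : x ∈ G
  · have h1 := CtxLe.loc G L x
    have h2 := CtxLe.glob (G.erase x) (x :: L) x (Finset.notMem_erase x G)
    rw [Finset.insert_erase h] at h2
    exact h1.trans h2
  · have h1 := CtxLe.glob G L x h
    have h2 := CtxLe.loc (insert x G) L x
    rw [Finset.erase_insert h] at h2
    exact h1.trans h2

lemma ctxle_append (G : Finset Var) (L : List Var) (xs : List Var) :
    CtxLe (G, L) (G, xs ++ L) := by
  induction xs with
  | nil => exact CtxLe.refl _
  | cons y ys ih => exact ih.trans (ctxle_cons G (ys ++ L) y)

lemma ctxle_insert (G : Finset Var) (L : List Var) (x : Var) :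
    CtxLe (G, L) (insert x G, L) := by
  by_cases h : x ∈ G
  · rw [Finset.insert_eq_self.mpr h]; exact CtxLe.refl _
  · exact CtxLe.glob G L x h

lemma ctxle_union (G H : Finset Var) (L : List Var) :
    CtxLe (G, L) (G ∪ H, L) := by
  induction H using Finset.induction with
  | empty => rw [Finset.union_empty]; exact CtxLe.refl _
  | insert _ _ hx ih =>
      rw [Finset.union_insert]
      exact ih.trans (ctxle_insert _ _ _)

theorem set_compatible_with_all (G : Finset Var) (Γ : Ctx) :
    Compatible (G, ([] : List Var)) Γ := by
  refine ⟨(G ∪ Γ.1, Γ.2), ?_, ?_⟩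
  · exact (ctxle_union G Γ.1 []).trans (by simpa using ctxle_append (G ∪ Γ.1) [] Γ.2)
  · rw [Finset.union_comm]
    have := ctxle_union Γ.1 G Γ.2
    exact (CtxLe.refl Γ).trans this
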